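/- For 0 < γ < 1 and any half-integer z = i + 1/2 with integer i ≥ 1, the quantity p(z) := 4z^{3-γ}((1+1/z)^{3-γ} − (1−1/z)^{3-γ}) − (3-γ)z^{2-γ}((1+1/z)^{2-γ} + 6 + (1−1/z)^{2-γ}) satisfies p(z) ≥ (1/10)(3-γ)(2-γ)(1-γ) z^{-γ} > 0. -/

import Mathlib

open Real Set

private lemma hd1 (p q t : ℝ) (h : (0:ℝ) < 1+t) (hpq : p - 1 = q) :
    HasDerivAt (fun s : ℝ => (1+s)^p) (p*(1+t)^q) t := by
  have := ((hasDerivAt_id t).const_add (1:ℝ)).rpow_const (p := p) (Or.inl h.ne')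
  rw [hpq] at this; simpa using this

private lemma hd2 (p q t : ℝ) (h : (0:ℝ) < 1-t) (hpq : p - 1 = q) :
    HasDerivAt (fun s : ℝ => (1-s)^p) (-(p*(1-t)^q)) t := by
  have := ((hasDerivAt_id t).const_sub (1:ℝ)).rpow_const (p := p) (Or.inl h.ne')
  rw [hpq] at this; simpa using this

noncomputable def pf (γ t : ℝ) : ℝ :=
  4*((1+t)^(3-γ) - (1-t)^(3-γ)) - (3-γ)*t*((1+t)^(2-γ) + (1-t)^(2-γ)) - 6*(3-γ)*t

noncomputable def pf1 (γ t : ℝ) : ℝ :=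
  3*(3-γ)*((1+t)^(2-γ) + (1-t)^(2-γ)) - (3-γ)*(2-γ)*t*((1+t)^(1-γ) - (1-t)^(1-γ)) - 6*(3-γ)

noncomputable def pf2 (γ t : ℝ) : ℝ :=
  2*(3-γ)*(2-γ)*((1+t)^(1-γ) - (1-t)^(1-γ)) - (3-γ)*(2-γ)*(1-γ)*t*((1+t)^(-γ) + (1-t)^(-γ))

noncomputable def ph (γ t : ℝ) : ℝ :=
  (1+t)^(-γ) + (1-t)^(-γ) + γ*t*((1+t)^(-1-γ) - (1-t)^(-1-γ))

private lemma hdf (γ t : ℝ) (h1 : (0:ℝ) < 1+t) (h2 : (0:ℝ) < 1-t) :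
    HasDerivAt (pf γ) (pf1 γ t) t := by
  have A := hd1 (3-γ) (2-γ) t h1 (by ring)
  have B := hd2 (3-γ) (2-γ) t h2 (by ring)
  have C := hd1 (2-γ) (1-γ) t h1 (by ring)
  have D := hd2 (2-γ) (1-γ) t h2 (by ring)
  have E := (((A.sub B).const_mul (4:ℝ)).sub
      (((hasDerivAt_id t).const_mul (3-γ)).mul (C.add D))).sub
      ((hasDerivAt_id t).const_mul (6*(3-γ)))
  convert E using 1
  rfl
  rfl
  rfl
  simp only [pf1, id, Pi.add_apply, Pi.sub_apply, Pi.mul_apply]; ring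

private lemma hdf1 (γ t : ℝ) (h1 : (0:ℝ) < 1+t) (h2 : (0:ℝ) < 1-t) :
    HasDerivAt (pf1 γ) (pf2 γ t) t := by
  have C := hd1 (2-γ) (1-γ) t h1 (by ring)
  have D := hd2 (2-γ) (1-γ) t h2 (by ring)
  have E := hd1 (1-γ) (-γ) t h1 (by ring)
  have F := hd2 (1-γ) (-γ) t h2 (by ring)
  have G := (((C.add D).const_mul (3*(3-γ))).sub
      (((hasDerivAt_id t).const_mul ((3-γ)*(2-γ))).mul (E.sub F))).sub (hasDerivAt_const t (6*(3-γ)))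
  convert G using 1
  rfl
  rfl
  rfl
  simp only [pf2, id, Pi.add_apply, Pi.sub_apply, Pi.mul_apply]; ring

private lemma hdf2 (γ t : ℝ) (h1 : (0:ℝ) < 1+t) (h2 : (0:ℝ) < 1-t) :
    HasDerivAt (pf2 γ) ((3-γ)*(2-γ)*(1-γ) * ph γ t) t := by
  have E := hd1 (1-γ) (-γ) t h1 (by ring)
  have F := hd2 (1-γ) (-γ) t h2 (by ring)
  have P := hd1 (-γ) (-1-γ) t h1 (by ring)
  have Q := hd2 (-γ) (-1-γ) t h2 (by ring)
  have G := ((E.sub F).const_mul (2*(3-γ)*(2-γ))).sub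
      (((hasDerivAt_id t).const_mul ((3-γ)*(2-γ)*(1-γ))).mul (P.add Q))
  convert G using 1
  rfl
  rfl
  rfl
  simp only [ph, id, Pi.add_apply, Pi.sub_apply, Pi.mul_apply]; ring

private lemma hdh (γ t : ℝ) (h1 : (0:ℝ) < 1+t) (h2 : (0:ℝ) < 1-t) :
    HasDerivAt (ph γ) (-(γ*(1+γ)*t*((1+t)^(-2-γ) + (1-t)^(-2-γ)))) t := by
  have P := hd1 (-γ) (-1-γ) t h1 (by ring)
  have Q := hd2 (-γ) (-1-γ) t h2 (by ring)
  have R := hd1 (-1-γ) (-2-γ) t h1 (by ring)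
  have S := hd2 (-1-γ) (-2-γ) t h2 (by ring)
  have G := (P.add Q).add (((hasDerivAt_id t).const_mul γ).mul (R.sub S))
  convert G using 1
  rfl
  rfl
  rfl
  simp only [id, Pi.add_apply, Pi.sub_apply, Pi.mul_apply]; ring

private lemma mono_aux {F F' : ℝ → ℝ}
    (hF : ∀ t ∈ Icc (0:ℝ) (2/3), HasDerivAt F (F' t) t)
    (hF' : ∀ t ∈ Ioo (0:ℝ) (2/3), 0 ≤ F' t) (h0 : F 0 = 0) :
    ∀ x ∈ Icc (0:ℝ) (2/3), 0 ≤ F x := by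
  intro x hx
  have hm : MonotoneOn F (Icc (0:ℝ) (2/3)) := by
    apply monotoneOn_of_deriv_nonneg (convex_Icc _ _)
    · exact fun t ht => (hF t ht).continuousAt.continuousWithinAt
    · rw [interior_Icc]
      exact fun t ht => (hF t (Ioo_subset_Icc_self ht)).differentiableAt.differentiableWithinAt
    · rw [interior_Icc]
      intro t ht
      rw [(hF t (Ioo_subset_Icc_self ht)).deriv]
      exact hF' t ht
  have := hm (by constructor <;> norm_num) hx hx.1
  rwa [h0] at this

private lemma step1 (γ : ℝ) (hγ0 : 0 < γ) (hγ1 : γ < 1) :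
    ∀ x ∈ Icc (0:ℝ) (2/3), 0 ≤ ph γ x + 28*x^2 - 2 := by
  apply mono_aux (F' := fun t => -(γ*(1+γ)*t*((1+t)^(-2-γ) + (1-t)^(-2-γ))) + 56*t)
  · intro t ht
    have h1 : (0:ℝ) < 1 + t := by have := ht.1; linarith
    have h2 : (0:ℝ) < 1 - t := by have := ht.2; linarith
    have G := (hdh γ t h1 h2).add (((hasDerivAt_pow 2 t).const_mul (28:ℝ)).sub
        (hasDerivAt_const t (2:ℝ)))
    convert G using 1
    rfl
    rfl
    all_goals (try funext x); push_cast [id, Pi.add_apply, Pi.sub_apply]; ring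
  · intro t ht
    obtain ⟨ht0, ht2⟩ := ht
    have h2 : (0:ℝ) < 1 - t := by linarith
    have hb : (1/3:ℝ) ≤ 1 - t := by linarith
    have hA : (1+t)^(-2-γ) ≤ 1 :=
      Real.rpow_le_one_of_one_le_of_nonpos (by linarith) (by linarith)
    have hB : (1-t)^(-2-γ) ≤ (1-t)^(-3:ℝ) :=
      Real.rpow_le_rpow_of_exponent_ge h2 (by linarith) (by linarith)
    have e3 : (1-t)^(-3:ℝ) = ((1-t)^(3:ℝ))⁻¹ := by
      rw [show (-3:ℝ) = -(3:ℝ) by norm_num, Real.rpow_neg h2.le]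
    have h27 : (1/27:ℝ) ≤ (1-t)^(3:ℝ) := by
      rw [show ((3:ℝ)) = ((3:ℕ):ℝ) by norm_num, Real.rpow_natCast]
      calc (1/27:ℝ) = (1/3)^3 := by norm_num
      _ ≤ (1-t)^3 := pow_le_pow_left₀ (by norm_num) hb 3
    have hB27 : (1-t)^(-3:ℝ) ≤ 27 := by
      rw [e3]
      calc ((1-t)^(3:ℝ))⁻¹ ≤ (1/27:ℝ)⁻¹ := inv_anti₀ (by norm_num) h27
      _ = 27 := by norm_num
    have hApos : (0:ℝ) < (1+t)^(-2-γ) := Real.rpow_pos_of_pos (by linarith) _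
    have hBpos : (0:ℝ) < (1-t)^(-2-γ) := Real.rpow_pos_of_pos h2 _
    have hgg : γ*(1+γ) ≤ 2 := by nlinarith
    have hAB : (1+t)^(-2-γ) + (1-t)^(-2-γ) ≤ 28 := by linarith
    have key : γ*(1+γ) * (t*((1+t)^(-2-γ) + (1-t)^(-2-γ))) ≤ 2*(t*28) :=
      mul_le_mul hgg (mul_le_mul_of_nonneg_left hAB ht0.le) (by positivity) (by norm_num)
    nlinarith [key]
  · norm_num [ph, Real.one_rpow]

private lemma step2 (γ : ℝ) (hγ0 : 0 < γ) (hγ1 : γ < 1) :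
    ∀ x ∈ Icc (0:ℝ) (2/3),
      0 ≤ pf2 γ x - (3-γ)*(2-γ)*(1-γ)*(2*x - 28/3*x^3) := by
  apply mono_aux (F' := fun t => (3-γ)*(2-γ)*(1-γ)*(ph γ t) -
      (3-γ)*(2-γ)*(1-γ)*(2 - 28*t^2))
  · intro t ht
    have h1 : (0:ℝ) < 1 + t := by have := ht.1; linarith
    have h2 : (0:ℝ) < 1 - t := by have := ht.2; linarith
    have G := (hdf2 γ t h1 h2).sub
      ((((hasDerivAt_id t).const_mul (2:ℝ)).sub ((hasDerivAt_pow 3 t).const_mul (28/3:ℝ))).const_mul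
        ((3-γ)*(2-γ)*(1-γ)))
    convert G using 1
    rfl
    rfl
    all_goals (try funext x); push_cast [id, Pi.add_apply, Pi.sub_apply]; ring
  · intro t ht
    have h1 := step1 γ hγ0 hγ1 t (Ioo_subset_Icc_self ht)
    have hc : (0:ℝ) ≤ (3-γ)*(2-γ)*(1-γ) :=
      (mul_pos (mul_pos (by linarith) (by linarith)) (by linarith)).le
    nlinarith [mul_le_mul_of_nonneg_left (by linarith : 2 - 28*t^2 ≤ ph γ t) hc]
  · simp [pf2, Real.one_rpow]

private lemma step3 (γ : ℝ) (hγ0 : 0 < γ) (hγ1 : γ < 1) :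
    ∀ x ∈ Icc (0:ℝ) (2/3),
      0 ≤ pf1 γ x - (3-γ)*(2-γ)*(1-γ)*(x^2 - 7/3*x^4) := by
  apply mono_aux (F' := fun t => pf2 γ t - (3-γ)*(2-γ)*(1-γ)*(2*t - 28/3*t^3))
  · intro t ht
    have h1 : (0:ℝ) < 1 + t := by have := ht.1; linarith
    have h2 : (0:ℝ) < 1 - t := by have := ht.2; linarith
    have G := (hdf1 γ t h1 h2).sub
      ((((hasDerivAt_pow 2 t)).sub ((hasDerivAt_pow 4 t).const_mul (7/3:ℝ))).const_mul
        ((3-γ)*(2-γ)*(1-γ)))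
    convert G using 1
    rfl
    rfl
    all_goals (try funext x); push_cast [id, Pi.add_apply, Pi.sub_apply]; ring
  · intro t ht
    exact step2 γ hγ0 hγ1 t (Ioo_subset_Icc_self ht)
  · simp [pf1, Real.one_rpow]; ring

private lemma step4 (γ : ℝ) (hγ0 : 0 < γ) (hγ1 : γ < 1) :
    ∀ x ∈ Icc (0:ℝ) (2/3),
      0 ≤ pf γ x - (3-γ)*(2-γ)*(1-γ)*(x^3/3 - 7/15*x^5) := by
  apply mono_aux (F' := fun t => pf1 γ t - (3-γ)*(2-γ)*(1-γ)*(t^2 - 7/3*t^4))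
  · intro t ht
    have h1 : (0:ℝ) < 1 + t := by have := ht.1; linarith
    have h2 : (0:ℝ) < 1 - t := by have := ht.2; linarith
    have G := (hdf γ t h1 h2).sub
      ((((hasDerivAt_pow 3 t).const_mul (1/3:ℝ)).sub
        ((hasDerivAt_pow 5 t).const_mul (7/15:ℝ))).const_mul ((3-γ)*(2-γ)*(1-γ)))
    convert G using 1
    rfl
    rfl
    all_goals (try funext x); push_cast [id, Pi.add_apply, Pi.sub_apply]; ring
  · intro t ht
    exact step3 γ hγ0 hγ1 t (Ioo_subset_Icc_self ht)
  · norm_num [pf, Real.one_rpow]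

private lemma keylem (γ : ℝ) (hγ0 : 0 < γ) (hγ1 : γ < 1) (x : ℝ)
    (hx0 : 0 < x) (hx2 : x ≤ 2/3) :
    (1/10) * ((3-γ)*(2-γ)*(1-γ)) * x^3 ≤ pf γ x := by
  have h4 := step4 γ hγ0 hγ1 x ⟨hx0.le, hx2⟩
  have hc : (0:ℝ) ≤ (3-γ)*(2-γ)*(1-γ) :=
    (mul_pos (mul_pos (by linarith) (by linarith)) (by linarith)).le
  have hpoly : (1/10)*x^3 ≤ x^3/3 - 7/15*x^5 := by
    nlinarith [mul_le_mul_of_nonneg_left (show x^2 ≤ 4/9 by nlinarith) (pow_pos hx0 3).le]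
  nlinarith [mul_le_mul_of_nonneg_left hpoly hc]

theorem stmt_17 (γ : ℝ) (hγ0 : 0 < γ) (hγ1 : γ < 1) (i : ℕ) (hi : 1 ≤ i) :
    (1/10) * (3 - γ) * (2 - γ) * (1 - γ) * ((i : ℝ) + 1/2) ^ (-γ)
        ≤ 4 * ((i : ℝ) + 1/2) ^ (3 - γ)
            * ((1 + 1 / ((i : ℝ) + 1/2)) ^ (3 - γ) - (1 - 1 / ((i : ℝ) + 1/2)) ^ (3 - γ))
          - (3 - γ) * ((i : ℝ) + 1/2) ^ (2 - γ)
            * ((1 + 1 / ((i : ℝ) + 1/2)) ^ (2 - γ) + 6 + (1 - 1 / ((i : ℝ) + 1/2)) ^ (2 - γ)) ∧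
    0 < (1/10) * (3 - γ) * (2 - γ) * (1 - γ) * ((i : ℝ) + 1/2) ^ (-γ) := by
  have hi1 : (1:ℝ) ≤ (i:ℝ) := by exact_mod_cast hi
  have hz : (3:ℝ)/2 ≤ (i:ℝ) + 1/2 := by linarith
  generalize (i:ℝ) + 1/2 = z at hz ⊢
  have hz0 : (0:ℝ) < z := by linarith
  have hx0 : (0:ℝ) < 1/z := by positivity
  have hx2 : 1/z ≤ 2/3 := by rw [div_le_div_iff₀ hz0 (by norm_num)]; linarith
  have key := keylem γ hγ0 hγ1 (1/z) hx0 hx2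
  have hA : (0:ℝ) < z ^ ((3:ℝ)-γ) := Real.rpow_pos_of_pos hz0 _
  have this2 := mul_le_mul_of_nonneg_left key hA.le
  have e1 : z ^ ((2:ℝ)-γ) = z ^ ((3:ℝ)-γ) * (1/z) := by
    rw [show (2:ℝ)-γ = (3-γ)-1 by ring, Real.rpow_sub hz0, Real.rpow_one]; ring
  have e2 : z ^ (-γ) = z ^ ((3:ℝ)-γ) * (1/z)^3 := by
    rw [show -γ = (3-γ)-3 by ring, Real.rpow_sub hz0,
      show (3:ℝ) = ((3:ℕ):ℝ) by norm_num, Real.rpow_natCast]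
    field_simp
  constructor
  · calc (1/10) * (3 - γ) * (2 - γ) * (1 - γ) * z ^ (-γ)
        = z ^ ((3:ℝ)-γ) * ((1/10)*((3-γ)*(2-γ)*(1-γ))*(1/z)^3) := by rw [e2]; ring
      _ ≤ z ^ ((3:ℝ)-γ) * pf γ (1/z) := this2
      _ = 4 * z ^ ((3:ℝ)-γ) * ((1 + 1/z) ^ ((3:ℝ)-γ) - (1 - 1/z) ^ ((3:ℝ)-γ))
          - (3-γ) * z ^ ((2:ℝ)-γ) * ((1 + 1/z) ^ ((2:ℝ)-γ) + 6 + (1 - 1/z) ^ ((2:ℝ)-γ)) := by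
        rw [e1]; simp only [pf]; ring
  · have : (0:ℝ) < z ^ (-γ) := Real.rpow_pos_of_pos hz0 _
    have h3 : (0:ℝ) < 3 - γ := by linarith
    have h2 : (0:ℝ) < 2 - γ := by linarith
    have h1 : (0:ℝ) < 1 - γ := by linarith
    positivity
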